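/- If T is a tree on n ≥ 2 vertices, then γ_{×2}(T) + γ(T) ≥ n + 1, where γ(T) is the domination number of T and γ_{×2}(T) is the double domination number of T. -/

import Mathlib

open Finset

/-- `S` is a dominating set of `G`: every vertex is in `S` or adjacent to a vertex of `S`. -/
def SimpleGraph.IsDomSet {V : Type*} (G : SimpleGraph V) (S : Finset V) : Prop :=
  ∀ v : V, v ∈ S ∨ ∃ u ∈ S, G.Adj u v

/-- The family of all dominating sets of `G`. -/
noncomputable def SimpleGraph.domSets {V : Type*} [Fintype V] (G : SimpleGraph V) :
    Finset (Finset V) :=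
  @Finset.filter _ (fun S => G.IsDomSet S) (Classical.decPred _) Finset.univ

/-- The average order (cardinality) of a dominating set of `G`. -/
noncomputable def SimpleGraph.avd {V : Type*} [Fintype V] (G : SimpleGraph V) : ℝ :=
  (∑ S ∈ G.domSets, (S.card : ℝ)) / (G.domSets).card

/-- The closed neighbourhood `N[v]` of `v`, as a finset. -/
noncomputable def SimpleGraph.closedNbhdFinset {V : Type*} [Fintype V] [DecidableEq V]
    (G : SimpleGraph V) (v : V) : Finset V :=
  insert v (@Finset.filter _ (fun u => G.Adj v u) (Classical.decPred _) Finset.univ)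

/-- The domination number: the least cardinality of a dominating set. -/
noncomputable def SimpleGraph.domNumber {V : Type*} [Fintype V] (G : SimpleGraph V) : ℕ :=
  sInf {k | ∃ S : Finset V, G.IsDomSet S ∧ S.card = k}

/-- The double domination number: the least cardinality of a set `S` with
`|N[v] ∩ S| ≥ 2` for every vertex `v`. -/
noncomputable def SimpleGraph.doubleDomNumber {V : Type*} [Fintype V] [DecidableEq V]
    (G : SimpleGraph V) : ℕ :=
  sInf {k | ∃ S : Finset V,
    (∀ v : V, 2 ≤ (G.closedNbhdFinset v ∩ S).card) ∧ S.card = k}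

/-- Auxiliary: iterate a "parent" map while it stays in `Sm`. -/
def topFun {V : Type*} (p : V → V) (rk : V → ℕ) (Sm : V → Prop) [DecidablePred Sm]
    (hdec : ∀ w, Sm (p w) → rk (p w) < rk w) (w : V) : V :=
  if h : Sm (p w) then topFun p rk Sm hdec (p w) else w
termination_by rk w
decreasing_by exact hdec w h

lemma topFun_of_not {V : Type*} (p : V → V) (rk : V → ℕ) (Sm : V → Prop) [DecidablePred Sm]
    (hdec : ∀ w, Sm (p w) → rk (p w) < rk w) (w : V) (h : ¬ Sm (p w)) :
    topFun p rk Sm hdec w = w := by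
  rw [topFun]; simp [h]

lemma topFun_of_mem {V : Type*} (p : V → V) (rk : V → ℕ) (Sm : V → Prop) [DecidablePred Sm]
    (hdec : ∀ w, Sm (p w) → rk (p w) < rk w) (w : V) (h : Sm (p w)) :
    topFun p rk Sm hdec w = topFun p rk Sm hdec (p w) := by
  rw [topFun]; simp [h]

lemma topFun_spec {V : Type*} (p : V → V) (rk : V → ℕ) (Sm : V → Prop) [DecidablePred Sm]
    (hdec : ∀ w, Sm (p w) → rk (p w) < rk w) (w : V) (hw : Sm w) :
    Sm (topFun p rk Sm hdec w) ∧ ¬ Sm (p (topFun p rk Sm hdec w)) := by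
  by_cases h : Sm (p w)
  · rw [topFun_of_mem p rk Sm hdec w h]
    exact topFun_spec p rk Sm hdec (p w) h
  · rw [topFun_of_not p rk Sm hdec w h]
    exact ⟨hw, h⟩
termination_by rk w
decreasing_by exact hdec w h

/-- Rooting a tree: a parent map and a rank function. -/
lemma exists_parent {V : Type*} (T : SimpleGraph V) (hT : T.IsTree) (root : V) :
    ∃ (p : V → V) (rk : V → ℕ), p root = root ∧ (∀ v, v ≠ root → T.Adj (p v) v) ∧
      (∀ u v, T.Adj u v → p v = u ∨ p u = v) ∧ (∀ v, v ≠ root → rk (p v) < rk v) := by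
  classical
  have hEU := fun v => hT.existsUnique_path v root
  choose P hP hP' using hEU
  set p : V → V := fun v => (P v).getVert 1 with hpdef
  set rk : V → ℕ := fun v => (P v).length with hrkdef
  have hProot : p root = root := by
    have : P root = SimpleGraph.Walk.nil := SimpleGraph.Walk.isPath_iff_eq_nil.mp
      (hP root)
    rw [hpdef]; simp only []; rw [this]; rfl
  have htail : ∀ v, v ≠ root → (P v).tail = P (p v) := by
    intro v hv
    have hnn : ¬ (P v).Nil := SimpleGraph.Walk.not_nil_of_ne hv
    exact hP' (p v) ((P v).tail) ((hP v).tail)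
  have hrk : ∀ v, v ≠ root → rk (p v) < rk v := by
    intro v hv
    have hnn : ¬ (P v).Nil := SimpleGraph.Walk.not_nil_of_ne hv
    have := SimpleGraph.Walk.length_tail_add_one hnn
    rw [htail v hv] at this
    simp only [hrkdef]
    omega
  have hadjp : ∀ v, v ≠ root → T.Adj (p v) v := by
    intro v hv
    have hnn : ¬ (P v).Nil := SimpleGraph.Walk.not_nil_of_ne hv
    exact (SimpleGraph.Walk.adj_snd hnn).symm
  refine ⟨p, rk, hProot, hadjp, ?_, hrk⟩
  intro u v hadj
  by_cases hu : u ∈ (P v).support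
  · left
    set Q := (P v).dropUntil u hu with hQ
    have hQp : Q.IsPath := (hP v).dropUntil hu
    have hvQ : v ∉ Q.support := by
      intro hv
      have hnd := (hP v).support_nodup
      rw [← SimpleGraph.Walk.take_spec (P v) hu, SimpleGraph.Walk.support_append] at hnd
      have h1 : v ∈ ((P v).takeUntil u hu).support := SimpleGraph.Walk.start_mem_support _
      have h2 : v ∈ Q.support.tail := by
        have hQc : Q.support = u :: Q.support.tail := Q.support_eq_cons ▸ rfl
        rcases List.mem_cons.mp (hQc ▸ hv) with h | h
        · exact absurd h hadj.symm.ne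
        · exact h
      exact (List.disjoint_of_nodup_append hnd) h1 h2
    have hR : (SimpleGraph.Walk.cons hadj.symm Q).IsPath := hQp.cons hvQ
    have heq := hP' v _ hR
    show (P v).getVert 1 = u
    rw [← heq]
    simp [SimpleGraph.Walk.getVert_cons_succ, SimpleGraph.Walk.getVert_zero]
  · right
    have hR : (SimpleGraph.Walk.cons hadj (P v)).IsPath := (hP v).cons hu
    have heq := hP' u _ hR
    show (P u).getVert 1 = v
    rw [← heq]
    simp [SimpleGraph.Walk.getVert_cons_succ, SimpleGraph.Walk.getVert_zero]

/-- For every tree `T` on `n ≥ 2` vertices, `γ_{×2}(T) + γ(T) ≥ n + 1`. -/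
theorem doubleDom_add_dom_ge {V : Type*} [Fintype V] [DecidableEq V]
    (T : SimpleGraph V) (hT : T.IsTree) (n : ℕ) (hn : n = Fintype.card V)
    (h2 : 2 ≤ n) :
    n + 1 ≤ T.doubleDomNumber + T.domNumber := by
  classical
  have hcard : 1 < Fintype.card V := by omega
  have hmemN : ∀ v x : V, x ∈ T.closedNbhdFinset v ↔ (x = v ∨ T.Adj v x) := by
    intro v x
    simp [SimpleGraph.closedNbhdFinset, Finset.mem_insert, Finset.mem_filter]
  -- every vertex has a neighbour
  have hadjex : ∀ v : V, ∃ u, T.Adj v u := by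
    intro v
    obtain ⟨w, hw⟩ := Fintype.exists_ne_of_one_lt_card hcard v
    obtain ⟨q⟩ := hT.isConnected.preconnected v w
    cases q with
    | nil => exact absurd rfl hw.symm
    | cons h _ => exact ⟨_, h⟩
  -- extract minimum sets
  have hdd : T.doubleDomNumber ∈
      {k | ∃ S : Finset V, (∀ v : V, 2 ≤ (T.closedNbhdFinset v ∩ S).card) ∧ S.card = k} := by
    apply Nat.sInf_mem
    refine ⟨(Finset.univ : Finset V).card, Finset.univ, ?_, rfl⟩
    intro v
    obtain ⟨u, hu⟩ := hadjex v
    rw [Finset.inter_univ]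
    refine Finset.one_lt_card.mpr ⟨v, ?_, u, ?_, hu.ne⟩
    · exact (hmemN v v).mpr (Or.inl rfl)
    · exact (hmemN v u).mpr (Or.inr hu)
  have hd : T.domNumber ∈ {k | ∃ S : Finset V, T.IsDomSet S ∧ S.card = k} := by
    apply Nat.sInf_mem
    exact ⟨(Finset.univ : Finset V).card, Finset.univ,
      fun v => Or.inl (Finset.mem_univ v), rfl⟩
  obtain ⟨S, hS2, hScard⟩ := hdd
  obtain ⟨D, hDdom, hDcard⟩ := hd
  -- basic neighbour extraction
  have htwoAdj : ∀ a, a ∉ S → ∃ x y, x ∈ S ∧ y ∈ S ∧ x ≠ y ∧ T.Adj a x ∧ T.Adj a y := by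
    intro a ha
    obtain ⟨x, hx, y, hy, hxy⟩ := Finset.one_lt_card.mp (hS2 a)
    obtain ⟨hx1, hx2⟩ := Finset.mem_inter.mp hx
    obtain ⟨hy1, hy2⟩ := Finset.mem_inter.mp hy
    have hax : T.Adj a x := by
      rcases (hmemN a x).mp hx1 with h | h
      · exact absurd (h ▸ hx2) ha
      · exact h
    have hay : T.Adj a y := by
      rcases (hmemN a y).mp hy1 with h | h
      · exact absurd (h ▸ hy2) ha
      · exact h
    exact ⟨x, y, hx2, hy2, hxy, hax, hay⟩
  have hSnbr : ∀ u, u ∈ S → ∃ x, x ∈ S ∧ x ≠ u ∧ T.Adj u x := by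
    intro u hu
    obtain ⟨x, hx, y, hy, hxy⟩ := Finset.one_lt_card.mp (hS2 u)
    obtain ⟨hx1, hx2⟩ := Finset.mem_inter.mp hx
    obtain ⟨hy1, hy2⟩ := Finset.mem_inter.mp hy
    rcases (hmemN u x).mp hx1 with h | h
    · -- x = u, so use y
      rcases (hmemN u y).mp hy1 with h' | h'
      · exact absurd (h.trans h'.symm) hxy
      · exact ⟨y, hy2, fun he => (h ▸ hxy) he.symm, h'⟩
    · exact ⟨x, hx2, h.ne', h⟩
  -- trivial case: S = univ
  by_cases hex : ∃ r : V, r ∉ S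
  swap
  · push_neg at hex
    have hSu : S = Finset.univ := Finset.eq_univ_iff_forall.mpr hex
    have hone : 1 ≤ D.card := by
      have hv : Nonempty V := Fintype.card_pos_iff.mp (by omega)
      obtain ⟨v⟩ := hv
      rcases hDdom v with h | ⟨u, hu, _⟩
      · exact Finset.card_pos.mpr ⟨v, h⟩
      · exact Finset.card_pos.mpr ⟨u, hu⟩
    have : S.card = n := by rw [hSu, Finset.card_univ, hn]
    omega
  obtain ⟨root, hroot⟩ := hex
  obtain ⟨p, rk, hProot, hadjp, hP3, hrk⟩ := exists_parent T hT root
  have hdec : ∀ w, (p w ∈ S) → rk (p w) < rk w := by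
    intro w h
    refine hrk w fun he => ?_
    rw [he, hProot] at h
    exact hroot h
  set tp : V → V := topFun p rk (· ∈ S) hdec with htp
  have htpS : ∀ w, w ∈ S → tp w ∈ S ∧ p (tp w) ∉ S := fun w hw =>
    topFun_spec p rk (· ∈ S) hdec w hw
  have htfix : ∀ w, p w ∉ S → tp w = w := fun w h => topFun_of_not p rk (· ∈ S) hdec w h
  have htstep : ∀ w, p w ∈ S → tp w = tp (p w) := fun w h => topFun_of_mem p rk (· ∈ S) hdec w h
  set A := Sᶜ with hA
  set S' := S.filter (fun u => p u ∉ S) with hS'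
  -- Step 1 : A.card + 1 ≤ S'.card
  have step1 : A.card + 1 ≤ S'.card := by
    have hfib : ∀ u ∈ S', p u ∈ A := by
      intro u hu
      exact Finset.mem_compl.mpr (Finset.mem_filter.mp hu).2
    have hsum := Finset.card_eq_sum_card_fiberwise hfib
    have hone : ∀ a ∈ A.erase root, 1 ≤ (S'.filter fun u => p u = a).card := by
      intro a ha
      have haA : a ∈ A := Finset.mem_of_mem_erase ha
      have haS : a ∉ S := Finset.mem_compl.mp haA
      obtain ⟨x, y, hxS, hyS, hxy, hax, hay⟩ := htwoAdj a haS
      have : ∃ u, u ∈ S ∧ p u = a := by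
        rcases hP3 a x hax with h | h
        · exact ⟨x, hxS, h⟩
        · rcases hP3 a y hay with h' | h'
          · exact ⟨y, hyS, h'⟩
          · exact absurd (h.symm.trans h') hxy
      obtain ⟨u, huS, hpu⟩ := this
      refine Finset.card_pos.mpr ⟨u, Finset.mem_filter.mpr ⟨?_, hpu⟩⟩
      exact Finset.mem_filter.mpr ⟨huS, hpu ▸ haS⟩
    have hroot2 : 2 ≤ (S'.filter fun u => p u = root).card := by
      obtain ⟨x, y, hxS, hyS, hxy, hax, hay⟩ := htwoAdj root hroot
      have hpx : p x = root := by
        rcases hP3 root x hax with h | h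
        · exact h
        · rw [hProot] at h; exact absurd h hax.ne
      have hpy : p y = root := by
        rcases hP3 root y hay with h | h
        · exact h
        · rw [hProot] at h; exact absurd h hay.ne
      refine Finset.one_lt_card.mpr ⟨x, ?_, y, ?_, hxy⟩
      · exact Finset.mem_filter.mpr ⟨Finset.mem_filter.mpr ⟨hxS, hpx ▸ hroot⟩, hpx⟩
      · exact Finset.mem_filter.mpr ⟨Finset.mem_filter.mpr ⟨hyS, hpy ▸ hroot⟩, hpy⟩
    have hrA : root ∈ A := Finset.mem_compl.mpr hroot
    have hsplitsum := Finset.add_sum_erase A (fun a => (S'.filter fun u => p u = a).card) hrA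
    have hsumlow : (A.erase root).card • 1 ≤
        ∑ a ∈ A.erase root, (S'.filter fun u => p u = a).card :=
      Finset.card_nsmul_le_sum _ _ _ hone
    have hce : (A.erase root).card = A.card - 1 := Finset.card_erase_of_mem hrA
    have hApos : 1 ≤ A.card := Finset.card_pos.mpr ⟨root, hrA⟩
    simp only [smul_eq_mul, mul_one] at hsumlow
    beta_reduce at hsplitsum
    omega
  -- Step 2 : S'.card ≤ D.card
  have step2 : S'.card ≤ D.card := by
    set C0 := S'.filter (fun u => ∀ x ∈ S, tp x = u → x ∉ D) with hC0def
    set C1 := S' \ C0 with hC1def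
    have hC1 : C1.card ≤ (D ∩ S).card := by
      have hw : ∀ u, ∃ x, u ∈ C1 → (x ∈ D ∩ S ∧ tp x = u) := by
        intro u
        by_cases hu : u ∈ C1
        · obtain ⟨huS', hunot⟩ := Finset.mem_sdiff.mp hu
          have hnot : ¬ (∀ x ∈ S, tp x = u → x ∉ D) := by
            intro hcon
            exact hunot (Finset.mem_filter.mpr ⟨huS', hcon⟩)
          push_neg at hnot
          obtain ⟨x, hxS, hxt, hxD⟩ := hnot
          exact ⟨x, fun _ => ⟨Finset.mem_inter.mpr ⟨hxD, hxS⟩, hxt⟩⟩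
        · exact ⟨u, fun h => absurd h hu⟩
      choose g hg using hw
      exact Finset.card_le_card_of_injOn g (fun u hu => (hg u hu).1)
        (fun u hu u' hu' he => by
          rw [← (hg u (by exact hu)).2, ← (hg u' (by exact hu')).2, he])
    set W0 := S.filter (fun w => tp w ∈ C0) with hW0def
    have hC0S' : C0 ⊆ S' := Finset.filter_subset _ _
    have hW0low : 2 * C0.card ≤ W0.card := by
      have hfib : ∀ w ∈ W0, tp w ∈ C0 := fun w hw => (Finset.mem_filter.mp hw).2
      rw [Finset.card_eq_sum_card_fiberwise hfib]
      have htwo : ∀ u ∈ C0, 2 ≤ (W0.filter fun w => tp w = u).card := by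
        intro u hu
        have huS' : u ∈ S' := hC0S' hu
        have huS : u ∈ S := (Finset.mem_filter.mp huS').1
        have hupS : p u ∉ S := (Finset.mem_filter.mp huS').2
        have htpu : tp u = u := htfix u hupS
        obtain ⟨x, hxS, hxu, hux⟩ := hSnbr u huS
        have hpx : p x = u := by
          rcases hP3 u x hux with h | h
          · exact h
          · exact absurd (h ▸ hxS) hupS
        have htpx : tp x = u := by
          rw [htstep x (hpx ▸ huS), hpx, htpu]
        refine Finset.one_lt_card.mpr ⟨u, ?_, x, ?_, fun h => hxu h.symm⟩
        · exact Finset.mem_filter.mpr ⟨Finset.mem_filter.mpr ⟨huS, by rw [htpu]; exact hu⟩, htpu⟩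
        · exact Finset.mem_filter.mpr ⟨Finset.mem_filter.mpr ⟨hxS, by rw [htpx]; exact hu⟩, htpx⟩
      calc 2 * C0.card = C0.card • 2 := by rw [smul_eq_mul]; ring
        _ ≤ ∑ u ∈ C0, (W0.filter fun w => tp w = u).card :=
          Finset.card_nsmul_le_sum _ _ _ htwo
    have hW0high : W0.card ≤ (D \ S).card + C0.card := by
      have hdomw : ∀ w, ∃ a, w ∈ W0 → (a ∈ D \ S ∧ T.Adj a w) := by
        intro w
        by_cases hw : w ∈ W0
        · have hwS : w ∈ S := (Finset.mem_filter.mp hw).1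
          have hwt : tp w ∈ C0 := (Finset.mem_filter.mp hw).2
          have hprop : ∀ x ∈ S, tp x = tp w → x ∉ D := (Finset.mem_filter.mp hwt).2
          have hwD : w ∉ D := hprop w hwS rfl
          rcases hDdom w with h | ⟨x, hxD, hxw⟩
          · exact absurd h hwD
          · have hxS : x ∉ S := by
              intro hxS
              rcases hP3 x w hxw with h | h
              · -- p w = x
                have : tp x = tp w := by rw [htstep w (h ▸ hxS), h]
                exact hprop x hxS this hxD
              · -- p x = w
                have : tp x = tp w := by rw [htstep x (h ▸ hwS), h]
                exact hprop x hxS this hxD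
            exact ⟨x, fun _ => ⟨Finset.mem_sdiff.mpr ⟨hxD, hxS⟩, hxw⟩⟩
        · exact ⟨w, fun h => absurd h hw⟩
      choose g hg using hdomw
      have hgfib : ∀ w ∈ W0, g w ∈ D \ S := fun w hw => (hg w hw).1
      rw [Finset.card_eq_sum_card_fiberwise hgfib]
      have hbound : ∀ a ∈ D \ S, (W0.filter fun w => g w = a).card ≤
          1 + (C0.filter fun u => p u = a).card := by
        intro a ha
        have haS : a ∉ S := (Finset.mem_sdiff.mp ha).2
        have hsub : W0.filter (fun w => g w = a) ⊆
            insert (p a) (C0.filter fun u => p u = a) := by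
          intro w hwf
          obtain ⟨hw, hga⟩ := Finset.mem_filter.mp hwf
          have hadj : T.Adj a w := hga ▸ (hg w hw).2
          rcases hP3 a w hadj with h | h
          · have htw : tp w = w := htfix w (h ▸ haS)
            have hwC0 : w ∈ C0 := htw ▸ (Finset.mem_filter.mp hw).2
            exact Finset.mem_insert_of_mem (Finset.mem_filter.mpr ⟨hwC0, h⟩)
          · exact h ▸ Finset.mem_insert_self _ _
        calc (W0.filter fun w => g w = a).card
            ≤ (insert (p a) (C0.filter fun u => p u = a)).card := Finset.card_le_card hsub
          _ ≤ 1 + (C0.filter fun u => p u = a).card := by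
              rw [add_comm]; exact Finset.card_insert_le _ _
      have hfibsum : ∑ a ∈ D \ S, (C0.filter fun u => p u = a).card ≤ C0.card := by
        set C0' := C0.filter (fun u => p u ∈ D \ S) with hC0'
        have h1 : C0'.card = ∑ a ∈ D \ S, (C0'.filter fun u => p u = a).card :=
          Finset.card_eq_sum_card_fiberwise (fun u hu => (Finset.mem_filter.mp hu).2)
        have h2 : ∀ a ∈ D \ S, (C0.filter fun u => p u = a) =
            (C0'.filter fun u => p u = a) := by
          intro a ha
          ext x
          simp only [hC0', Finset.mem_filter]
          constructor
          · rintro ⟨hx, hpx⟩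
            exact ⟨⟨hx, hpx ▸ ha⟩, hpx⟩
          · rintro ⟨⟨hx, _⟩, hpx⟩
            exact ⟨hx, hpx⟩
        have h2' : ∀ a ∈ D \ S, (C0.filter fun u => p u = a).card =
            (C0'.filter fun u => p u = a).card := fun a ha => by rw [h2 a ha]
        rw [Finset.sum_congr rfl h2', ← h1]
        exact Finset.card_le_card (Finset.filter_subset _ _)
      calc ∑ a ∈ D \ S, (W0.filter fun w => g w = a).card
          ≤ ∑ a ∈ D \ S, (1 + (C0.filter fun u => p u = a).card) :=
            Finset.sum_le_sum hbound
        _ = (D \ S).card + ∑ a ∈ D \ S, (C0.filter fun u => p u = a).card := by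
            rw [Finset.sum_add_distrib, Finset.sum_const, smul_eq_mul, mul_one]
        _ ≤ (D \ S).card + C0.card := by omega
    have hC0card : C0.card ≤ (D \ S).card := by omega
    have hsplit : C1.card + C0.card = S'.card := Finset.card_sdiff_add_card_eq_card hC0S'
    have hDsplit : (D ∩ S).card + (D \ S).card = D.card :=
      Finset.card_inter_add_card_sdiff D S
    omega
  have hcompl : S.card + A.card = Fintype.card V := Finset.card_add_card_compl S
  have hS'S : S'.card ≤ S.card := Finset.card_le_card (Finset.filter_subset _ _)
  omega
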